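/- For all complex numbers a, b and all real p ≥ 2 with a + t(b−a) ≠ 0 for all t ∈ [0,1], one has | |b|^{p-2}b − |a|^{p-2}a | ≤ (p−1)·(|a|^{(p−2)/2} + |b|^{(p−2)/2})·| |b|^{(p−2)/2}b − |a|^{(p−2)/2}a |. -/

import Mathlib

-- Young-type inequality: (β^s - α^s) α ≤ s β^s (β - α) for 0 ≤ α ≤ β, s > 0
lemma aux_young (s α β : ℝ) (hs : 0 < s) (hα : 0 ≤ α) (hαβ : α ≤ β) :
    (β ^ s - α ^ s) * α ≤ s * β ^ s * (β - α) := by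
  have hβ : 0 ≤ β := hα.trans hαβ
  rcases eq_or_lt_of_le hα with h0 | h0
  · have : (0:ℝ) ≤ s * β ^ s * β := by positivity
    simp [← h0]
    nlinarith [Real.rpow_nonneg hβ s]
  · have h1s : (0:ℝ) < 1 + s := by linarith
    have hβ0 : (0:ℝ) < β := lt_of_lt_of_le h0 hαβ
    have key := Real.geom_mean_le_arith_mean2_weighted
      (w₁ := 1/(1+s)) (w₂ := s/(1+s)) (p₁ := α ^ (1+s)) (p₂ := β ^ (1+s))
      (by positivity) (by positivity) (by positivity) (by positivity)
      (by field_simp)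
    have e1 : (α ^ (1+s)) ^ (1/(1+s)) = α := by
      rw [← Real.rpow_mul hα, mul_one_div_cancel h1s.ne', Real.rpow_one]
    have e2 : (β ^ (1+s)) ^ (s/(1+s)) = β ^ s := by
      rw [← Real.rpow_mul hβ]
      congr 1
      field_simp
    rw [e1, e2] at key
    have hαs : α ^ (1 + s) = α ^ s * α := by
      rw [add_comm, Real.rpow_add_one h0.ne']
    have hβs : β ^ (1 + s) = β ^ s * β := by
      rw [add_comm, Real.rpow_add_one hβ0.ne']
    rw [hαs, hβs] at key
    have key2 : (1 + s) * (α * β ^ s) ≤ α ^ s * α + s * (β ^ s * β) := by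
      have hmul := mul_le_mul_of_nonneg_left key h1s.le
      have e3 : (1+s) * (1/(1+s) * (α ^ s * α) + s/(1+s) * (β ^ s * β))
          = α ^ s * α + s * (β ^ s * β) := by
        field_simp
      rw [e3] at hmul
      exact hmul
    nlinarith [key2]

-- Lipschitz bound for z ↦ |z|^s z along the chord, when |A| ≤ |B|
lemma aux_lip (s : ℝ) (hs : 0 < s) (A B : ℂ) (hAB : ‖A‖ ≤ ‖B‖) :
    ‖(‖B‖ ^ s : ℝ) * B - (‖A‖ ^ s : ℝ) * A‖ ≤
      (1 + s) * ‖B‖ ^ s * ‖B - A‖ := by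
  set α := ‖A‖ with hα
  set β := ‖B‖ with hβ
  have hα0 : 0 ≤ α := norm_nonneg A
  have hβ0 : 0 ≤ β := norm_nonneg B
  have hps : α ^ s ≤ β ^ s := Real.rpow_le_rpow hα0 hAB hs.le
  have e : ((β ^ s : ℝ) : ℂ) * B - ((α ^ s : ℝ) : ℂ) * A
      = ((β ^ s : ℝ) : ℂ) * (B - A) + (((β ^ s - α ^ s : ℝ)) : ℂ) * A := by
    push_cast; ring
  rw [e]
  have t1 : ‖((β ^ s : ℝ) : ℂ) * (B - A)‖ = β ^ s * ‖B - A‖ := by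
    rw [norm_mul, Complex.norm_real, Real.norm_eq_abs, abs_of_nonneg (Real.rpow_nonneg hβ0 s)]
  have t2 : ‖(((β ^ s - α ^ s : ℝ)) : ℂ) * A‖ = (β ^ s - α ^ s) * α := by
    rw [norm_mul, Complex.norm_real, Real.norm_eq_abs, abs_of_nonneg (by linarith)]
  have tri := norm_add_le (((β ^ s : ℝ) : ℂ) * (B - A)) ((((β ^ s - α ^ s : ℝ)) : ℂ) * A)
  rw [t1, t2] at tri
  have hsub : β - α ≤ ‖B - A‖ := by
    have h1 : |β - α| ≤ ‖B - A‖ := abs_norm_sub_norm_le B A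
    have := abs_le.mp h1
    linarith [this.2]
  have hy := aux_young s α β hs hα0 hAB
  have h4 : s * β ^ s * (β - α) ≤ s * β ^ s * ‖B - A‖ := by
    apply mul_le_mul_of_nonneg_left hsub
    positivity
  nlinarith [tri]

-- symmetric version
lemma aux_lip2 (s : ℝ) (hs : 0 < s) (A B : ℂ) :
    ‖(‖B‖ ^ s : ℝ) * B - (‖A‖ ^ s : ℝ) * A‖ ≤
      (1 + s) * (‖A‖ ^ s + ‖B‖ ^ s) * ‖B - A‖ := by
  have hA0 : 0 ≤ ‖A‖ ^ s := Real.rpow_nonneg (norm_nonneg A) s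
  have hB0 : 0 ≤ ‖B‖ ^ s := Real.rpow_nonneg (norm_nonneg B) s
  have hD : 0 ≤ ‖B - A‖ := norm_nonneg _
  rcases le_total (‖A‖) (‖B‖) with hle | hle
  · calc ‖(‖B‖ ^ s : ℝ) * B - (‖A‖ ^ s : ℝ) * A‖
        ≤ (1 + s) * ‖B‖ ^ s * ‖B - A‖ := aux_lip s hs A B hle
      _ ≤ (1 + s) * (‖A‖ ^ s + ‖B‖ ^ s) * ‖B - A‖ := by
          apply mul_le_mul_of_nonneg_right _ hD
          apply mul_le_mul_of_nonneg_left _ (by linarith)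
          linarith
  · have key := aux_lip s hs B A hle
    have e1 : ‖(‖B‖ ^ s : ℝ) * B - (‖A‖ ^ s : ℝ) * A‖
        = ‖(‖A‖ ^ s : ℝ) * A - (‖B‖ ^ s : ℝ) * B‖ :=
      norm_sub_rev _ _
    have e2 : ‖A - B‖ = ‖B - A‖ := norm_sub_rev _ _
    rw [e2] at key
    rw [e1]
    calc ‖(‖A‖ ^ s : ℝ) * A - (‖B‖ ^ s : ℝ) * B‖
        ≤ (1 + s) * ‖A‖ ^ s * ‖B - A‖ := key
      _ ≤ (1 + s) * (‖A‖ ^ s + ‖B‖ ^ s) * ‖B - A‖ := by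
          apply mul_le_mul_of_nonneg_right _ hD
          apply mul_le_mul_of_nonneg_left _ (by linarith)
          linarith

theorem lindqvist_VI (p : ℝ) (hp : 2 ≤ p) (a b : ℂ)
    (h : ∀ t ∈ Set.Icc (0 : ℝ) 1, a + (t : ℂ) * (b - a) ≠ 0) :
    ‖(‖b‖ ^ (p - 2) : ℝ) * b - (‖a‖ ^ (p - 2) : ℝ) * a‖ ≤
      (p - 1) * (‖a‖ ^ ((p - 2) / 2) + ‖b‖ ^ ((p - 2) / 2)) *
        ‖(‖b‖ ^ ((p - 2) / 2) : ℝ) * b -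
          (‖a‖ ^ ((p - 2) / 2) : ℝ) * a‖ := by
  rcases eq_or_lt_of_le hp with hp2 | hp2
  · -- p = 2
    subst hp2
    norm_num [Real.rpow_zero]
    linarith [norm_nonneg (b - a)]
  · -- p > 2
    have hp0 : (0:ℝ) < p := by linarith
    set s : ℝ := (p - 2) / p with hs_def
    have hs : 0 < s := div_pos (by linarith) hp0
    -- abbreviations
    have habs : ∀ z : ℂ, ‖((‖z‖ ^ ((p - 2) / 2) : ℝ) : ℂ) * z‖
        = ‖z‖ ^ (p / 2) := by
      intro z
      rw [norm_mul, Complex.norm_real, Real.norm_eq_abs,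
        abs_of_nonneg (Real.rpow_nonneg (norm_nonneg z) _)]
      rw [show p / 2 = (p - 2) / 2 + 1 by ring,
        Real.rpow_add' (norm_nonneg z) (by intro hc; nlinarith), Real.rpow_one]
    have habs_pow : ∀ z : ℂ, ‖((‖z‖ ^ ((p - 2) / 2) : ℝ) : ℂ) * z‖ ^ s
        = ‖z‖ ^ ((p - 2) / 2) := by
      intro z
      rw [habs z, ← Real.rpow_mul (norm_nonneg z)]
      congr 1
      rw [hs_def, div_mul_div_comm, div_eq_div_iff (by positivity) (by norm_num)]
      ring
    have hmul : ∀ z : ℂ,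
        ((‖((‖z‖ ^ ((p - 2) / 2) : ℝ) : ℂ) * z‖ ^ s : ℝ) : ℂ) *
          (((‖z‖ ^ ((p - 2) / 2) : ℝ) : ℂ) * z)
        = ((‖z‖ ^ (p - 2) : ℝ) : ℂ) * z := by
      intro z
      rw [habs_pow z]
      have : ‖z‖ ^ ((p - 2) / 2) * ‖z‖ ^ ((p - 2) / 2)
          = ‖z‖ ^ (p - 2) := by
        rw [← Real.rpow_add' (norm_nonneg z)
          (by intro hc; nlinarith : (p - 2) / 2 + (p - 2) / 2 ≠ 0)]
        congr 1
        ring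
      rw [← this]
      push_cast
      ring
    set A : ℂ := ((‖a‖ ^ ((p - 2) / 2) : ℝ) : ℂ) * a with hA
    set B : ℂ := ((‖b‖ ^ ((p - 2) / 2) : ℝ) : ℂ) * b with hB
    have hL : ((‖b‖ ^ (p - 2) : ℝ) : ℂ) * b - ((‖a‖ ^ (p - 2) : ℝ) : ℂ) * a
        = ((‖B‖ ^ s : ℝ) : ℂ) * B - ((‖A‖ ^ s : ℝ) : ℂ) * A := by
      rw [hA, hB, hmul a, hmul b]
    rw [hL]
    have key := aux_lip2 s hs A B
    have hAs : ‖A‖ ^ s = ‖a‖ ^ ((p - 2) / 2) := habs_pow a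
    have hBs : ‖B‖ ^ s = ‖b‖ ^ ((p - 2) / 2) := habs_pow b
    refine key.trans ?_
    rw [hAs, hBs]
    have h1 : 1 + s ≤ p - 1 := by
      rw [hs_def, show (1:ℝ) + (p - 2) / p = (2 * p - 2) / p by field_simp; ring,
        div_le_iff₀ hp0]
      nlinarith
    have hna := Real.rpow_nonneg (norm_nonneg a) ((p - 2) / 2)
    have hnb := Real.rpow_nonneg (norm_nonneg b) ((p - 2) / 2)
    exact mul_le_mul_of_nonneg_right
      (mul_le_mul_of_nonneg_right h1 (by linarith)) (norm_nonneg _)
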